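/- arXiv:1408.5732 — 3 statements merged into one kernel-verified Lean document; each statement's English description precedes it below -/
import Mathlib

section
/- Suppose H : ℝ → ℝ is strictly increasing and differentiable at x0 with H'(x0) = ω0 > 0. Let R1 > 1. For every ε > 0 there exists δ > 0 such that for all z1 < z2 < z3 < z4 in (x0−δ, x0+δ) satisfying: (a) the three intervals [z1,z2], [z2,z3], [z3,z4] have pairwise R1-comparable lengths, and (b) max_i |z_i − x0| ≤ R1·(z2 − z1), one has |Dist(z1,z2,z3,z4;H) − 1| ≤ C·ε, where C > 0 depends only on R1 and ω0. -/
noncomputable def Cr (z1 z2 z3 z4 : ℝ) : ℝ :=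
  ((z2 - z1) * (z4 - z3)) / ((z3 - z1) * (z4 - z2))

noncomputable def Distortion (z1 z2 z3 z4 : ℝ) (F : ℝ → ℝ) : ℝ :=
  Cr (F z1) (F z2) (F z3) (F z4) / Cr z1 z2 z3 z4

lemma ratio_bound {t a b c d : ℝ} (ht0 : 0 ≤ t) (ht : t ≤ 1/2)
    (ha : |a| ≤ t) (hb : |b| ≤ t) (hc : |c| ≤ t) (hd : |d| ≤ t) :
    |(1+a)*(1+b)/((1+c)*(1+d)) - 1| ≤ 20*t := by
  obtain ⟨ha1, ha2⟩ := abs_le.mp ha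
  obtain ⟨hb1, hb2⟩ := abs_le.mp hb
  obtain ⟨hc1, hc2⟩ := abs_le.mp hc
  obtain ⟨hd1, hd2⟩ := abs_le.mp hd
  have hden : (1:ℝ)/4 ≤ (1+c)*(1+d) := by nlinarith
  have hdenpos : 0 < (1+c)*(1+d) := by linarith
  rw [div_sub_one hdenpos.ne', abs_div, abs_of_pos hdenpos, div_le_iff₀ hdenpos]
  have hnum : |(1+a)*(1+b) - (1+c)*(1+d)| ≤ 5*t := by
    rw [abs_le]; constructor <;> nlinarith
  calc |(1+a)*(1+b) - (1+c)*(1+d)| ≤ 5*t := hnum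
    _ ≤ 20*t*((1+c)*(1+d)) := by nlinarith

lemma pair_bound {ω0 t R1 s D Ei Ej A : ℝ} (hω : 0 < ω0) (hD : 0 < D)
    (hR1 : 0 < R1) (ht0 : 0 ≤ t) (hsD : s ≤ R1 * D)
    (hEi : |Ei| ≤ (t*ω0/(2*R1^2)) * (R1*s)) (hEj : |Ej| ≤ (t*ω0/(2*R1^2)) * (R1*s))
    (hA : A = ω0*D + (Ej - Ei)) : |A/(ω0*D) - 1| ≤ t := by
  have hωD : 0 < ω0 * D := mul_pos hω hD
  have h1 : A/(ω0*D) - 1 = (Ej - Ei)/(ω0*D) := by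
    rw [hA]; field_simp; ring
  rw [h1, abs_div, abs_of_pos hωD, div_le_iff₀ hωD]
  have hE : |Ej - Ei| ≤ 2 * ((t*ω0/(2*R1^2)) * (R1*s)) := by
    calc |Ej - Ei| ≤ |Ej| + |Ei| := abs_sub _ _
      _ ≤ 2 * ((t*ω0/(2*R1^2)) * (R1*s)) := by linarith
  have h2 : 2 * ((t*ω0/(2*R1^2)) * (R1*s)) = t * ω0 * s / R1 := by
    field_simp
  have h3 : t * ω0 * s / R1 ≤ t * (ω0 * D) := by
    rw [div_le_iff₀ hR1]
    nlinarith [mul_nonneg (mul_nonneg ht0 hω.le) (sub_nonneg.mpr hsD)]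
  linarith [hE, h2 ▸ hE]

set_option maxHeartbeats 1000000 in
/-- Lemma 5.1: near a point of positive differentiability of `H`, the cross-ratio
distortion under `H` of comparable quadruples is close to `1`. -/
theorem distortion_near_diff_point (H : ℝ → ℝ) (hH : StrictMono H)
    (x0 ω0 : ℝ) (hd : HasDerivAt H ω0 x0) (hω : 0 < ω0)
    (R1 : ℝ) (hR1 : 1 < R1) :
    ∃ C > 0, ∀ ε > 0, ∃ δ > 0, ∀ z1 z2 z3 z4 : ℝ,
      z1 < z2 → z2 < z3 → z3 < z4 →
      z1 ∈ Set.Ioo (x0 - δ) (x0 + δ) → z2 ∈ Set.Ioo (x0 - δ) (x0 + δ) →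
      z3 ∈ Set.Ioo (x0 - δ) (x0 + δ) → z4 ∈ Set.Ioo (x0 - δ) (x0 + δ) →
      (z2 - z1 ≤ R1 * (z3 - z2) ∧ z3 - z2 ≤ R1 * (z2 - z1)) →
      (z2 - z1 ≤ R1 * (z4 - z3) ∧ z4 - z3 ≤ R1 * (z2 - z1)) →
      (z3 - z2 ≤ R1 * (z4 - z3) ∧ z4 - z3 ≤ R1 * (z3 - z2)) →
      (|z1 - x0| ≤ R1 * (z2 - z1) ∧ |z2 - x0| ≤ R1 * (z2 - z1) ∧
        |z3 - x0| ≤ R1 * (z2 - z1) ∧ |z4 - x0| ≤ R1 * (z2 - z1)) →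
      |Distortion z1 z2 z3 z4 H - 1| ≤ C * ε := by
  have hR0 : (0:ℝ) < R1 := by linarith
  refine ⟨10, by norm_num, ?_⟩
  intro ε hε
  set t : ℝ := min ε 1 / 2 with ht_def
  have ht0 : 0 < t := by positivity
  have ht2 : t ≤ 1/2 := by
    have : min ε 1 ≤ 1 := min_le_right _ _
    simp only [ht_def]; linarith
  set η : ℝ := t * ω0 / (2 * R1^2) with hη_def
  have hηpos : 0 < η := by positivity
  have hlo := (hasDerivAt_iff_isLittleO.mp hd).def hηpos
  obtain ⟨δ, hδpos, hδ⟩ := Metric.eventually_nhds_iff.mp hlo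
  refine ⟨δ, hδpos, ?_⟩
  intro z1 z2 z3 z4 h12 h23 h34 hz1 hz2 hz3 hz4 hc1 hc2 hc3 hfar
  obtain ⟨hf1, hf2, hf3, hf4⟩ := hfar
  set s : ℝ := z2 - z1 with hs_def
  have hs : 0 < s := by simp [hs_def]; linarith
  -- error bound at each point
  have he : ∀ z : ℝ, z ∈ Set.Ioo (x0 - δ) (x0 + δ) → |z - x0| ≤ R1 * s →
      |H z - H x0 - ω0*(z - x0)| ≤ η * (R1 * s) := by
    intro z hz hzf
    have hdz : dist z x0 < δ := by
      rw [Real.dist_eq, abs_lt]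
      obtain ⟨h1, h2⟩ := hz
      constructor <;> linarith
    have := hδ hdz
    simp only [Real.norm_eq_abs, smul_eq_mul] at this
    have h1 : |H z - H x0 - ω0 * (z - x0)| ≤ η * |z - x0| := by
      convert this using 2
      ring
    calc |H z - H x0 - ω0*(z - x0)| ≤ η * |z - x0| := h1
      _ ≤ η * (R1 * s) := by
          apply mul_le_mul_of_nonneg_left hzf hηpos.le
  have he1 := he z1 hz1 hf1
  have he2 := he z2 hz2 hf2
  have he3 := he z3 hz3 hf3
  have he4 := he z4 hz4 hf4
  -- r values
  set E1 := H z1 - H x0 - ω0*(z1 - x0) with hE1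
  set E2 := H z2 - H x0 - ω0*(z2 - x0) with hE2
  set E3 := H z3 - H x0 - ω0*(z3 - x0) with hE3
  set E4 := H z4 - H x0 - ω0*(z4 - x0) with hE4
  have hA12 : H z2 - H z1 = ω0*(z2 - z1) + (E2 - E1) := by simp [hE1, hE2]; ring
  have hA34 : H z4 - H z3 = ω0*(z4 - z3) + (E4 - E3) := by simp [hE3, hE4]; ring
  have hA13 : H z3 - H z1 = ω0*(z3 - z1) + (E3 - E1) := by simp [hE1, hE3]; ring
  have hA24 : H z4 - H z2 = ω0*(z4 - z2) + (E4 - E2) := by simp [hE2, hE4]; ring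
  have hD12 : (0:ℝ) < z2 - z1 := by linarith
  have hD34 : (0:ℝ) < z4 - z3 := by linarith
  have hD13 : (0:ℝ) < z3 - z1 := by linarith
  have hD24 : (0:ℝ) < z4 - z2 := by linarith
  have hs12 : s ≤ R1 * (z2 - z1) := by nlinarith
  have hs34 : s ≤ R1 * (z4 - z3) := hc2.1
  have hs13 : s ≤ R1 * (z3 - z1) := by nlinarith
  have hs24 : s ≤ R1 * (z4 - z2) := by nlinarith
  have hr12 := pair_bound hω hD12 hR0 ht0.le hs12 he1 he2 hA12
  have hr34 := pair_bound hω hD34 hR0 ht0.le hs34 he3 he4 hA34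
  have hr13 := pair_bound hω hD13 hR0 ht0.le hs13 he1 he3 hA13
  have hr24 := pair_bound hω hD24 hR0 ht0.le hs24 he2 he4 hA24
  -- express Distortion as a ratio of (1+r)'s
  set r12 := (H z2 - H z1)/(ω0*(z2 - z1)) - 1 with hr12d
  set r34 := (H z4 - H z3)/(ω0*(z4 - z3)) - 1 with hr34d
  set r13 := (H z3 - H z1)/(ω0*(z3 - z1)) - 1 with hr13d
  set r24 := (H z4 - H z2)/(ω0*(z4 - z2)) - 1 with hr24d
  have hHA12 : (0:ℝ) < H z2 - H z1 := by linarith [hH h12]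
  have hHA34 : (0:ℝ) < H z4 - H z3 := by linarith [hH h34]
  have hHA13 : (0:ℝ) < H z3 - H z1 := by linarith [hH (h12.trans h23)]
  have hHA24 : (0:ℝ) < H z4 - H z2 := by linarith [hH (h23.trans h34)]
  have hDist : Distortion z1 z2 z3 z4 H = (1+r12)*(1+r34)/((1+r13)*(1+r24)) := by
    have e12 : 1 + r12 = (H z2 - H z1)/(ω0*(z2 - z1)) := by rw [hr12d]; ring
    have e34 : 1 + r34 = (H z4 - H z3)/(ω0*(z4 - z3)) := by rw [hr34d]; ring
    have e13 : 1 + r13 = (H z3 - H z1)/(ω0*(z3 - z1)) := by rw [hr13d]; ring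
    have e24 : 1 + r24 = (H z4 - H z2)/(ω0*(z4 - z2)) := by rw [hr24d]; ring
    have n0 : ω0 ≠ 0 := hω.ne'
    have n1 : z2 - z1 ≠ 0 := hD12.ne'
    have n2 : z4 - z3 ≠ 0 := hD34.ne'
    have n3 : z3 - z1 ≠ 0 := hD13.ne'
    have n4 : z4 - z2 ≠ 0 := hD24.ne'
    have n5 : H z3 - H z1 ≠ 0 := hHA13.ne'
    have n6 : H z4 - H z2 ≠ 0 := hHA24.ne'
    rw [e12, e34, e13, e24, Distortion, Cr, Cr]
    field_simp
  rw [hDist]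
  have hmain := ratio_bound ht0.le ht2 hr12 hr34 hr13 hr24
  have : (20:ℝ)*t ≤ 10 * ε := by
    have h1 : min ε 1 ≤ ε := min_le_left _ _
    simp only [ht_def]; linarith
  linarith
end

section
/- Let F : [z1, z4] → ℝ be C² with F' ≥ c > 0 on [z1,z4], where z1 < z2 < z3 < z4. Then |Dist(z1,z2,z3,z4;F) − 1| ≤ C1·(z4 − z1), where C1 depends only on bounds for F', F'' and c. -/
/-- C² version of Lemma 2.8: for a C² map with derivative bounded below by
`c > 0`, the cross-ratio distortion of any quadruple in the interval is
`1 + O(z4 - z1)`. -/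
theorem distortion_C2_estimate (a b : ℝ) (hab : a < b) (F : ℝ → ℝ) (c : ℝ)
    (hc : 0 < c) (hF : ContDiffOn ℝ 2 F (Set.Icc a b))
    (hderiv : ∀ x ∈ Set.Icc a b, c ≤ deriv F x) :
    ∃ C1 > 0, ∀ z1 z2 z3 z4 : ℝ,
      a ≤ z1 → z1 < z2 → z2 < z3 → z3 < z4 → z4 ≤ b →
      |Distortion z1 z2 z3 z4 F - 1| ≤ C1 * (z4 - z1) := by
  classical
  open Set in
  have hU : UniqueDiffOn ℝ (Set.Icc a b) := uniqueDiffOn_Icc hab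
  set g := derivWithin F (Set.Icc a b) with hgdef
  have hgc : ContDiffOn ℝ 1 g (Set.Icc a b) := hF.derivWithin hU (by norm_num)
  have hg'cont : ContinuousOn (derivWithin g (Set.Icc a b)) (Set.Icc a b) :=
    hgc.continuousOn_derivWithin hU le_rfl
  obtain ⟨M, hM⟩ :=
    (isCompact_Icc (a := a) (b := b)).exists_bound_of_continuousOn hgc.continuousOn
  obtain ⟨K, hK⟩ :=
    (isCompact_Icc (a := a) (b := b)).exists_bound_of_continuousOn hg'cont
  have hM0 : 0 ≤ M := le_trans (norm_nonneg _) (hM a (Set.left_mem_Icc.2 hab.le))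
  have hK0 : 0 ≤ K := le_trans (norm_nonneg _) (hK a (Set.left_mem_Icc.2 hab.le))
  -- g is K-Lipschitz on [a,b]
  have hlip : ∀ x ∈ Set.Icc a b, ∀ y ∈ Set.Icc a b, |g y - g x| ≤ K * |y - x| := by
    intro x hx y hy
    have := (convex_Icc a b).norm_image_sub_le_of_norm_derivWithin_le (f := g)
      (hgc.differentiableOn one_ne_zero) (fun z hz => hK z hz) hx hy
    simpa [Real.norm_eq_abs] using this
  have hgeq : ∀ x ∈ Set.Ioo a b, g x = deriv F x := by
    intro x hx
    exact derivWithin_of_mem_nhds (Icc_mem_nhds hx.1 hx.2)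
  clear_value g
  have hglb : ∀ x ∈ Set.Ioo a b, c ≤ g x := by
    intro x hx
    rw [hgeq x hx]
    exact hderiv x (Set.Ioo_subset_Icc_self hx)
  have hgub : ∀ x ∈ Set.Icc a b, g x ≤ M := fun x hx =>
    le_trans (le_abs_self _) (hM x hx)
  -- mean value theorem: slopes are values of g at interior points
  have slope : ∀ u v : ℝ, a ≤ u → u < v → v ≤ b →
      ∃ ξ ∈ Set.Ioo u v, F v - F u = g ξ * (v - u) := by
    intro u v hau huv hvb
    have hsub : Set.Icc u v ⊆ Set.Icc a b := Set.Icc_subset_Icc hau hvb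
    have hcont : ContinuousOn F (Set.Icc u v) := hF.continuousOn.mono hsub
    have hdiff : ∀ x ∈ Set.Ioo u v, HasDerivAt F (deriv F x) x := by
      intro x hx
      have hx' : Set.Ioo u v ⊆ Set.Ioo a b := Set.Ioo_subset_Ioo hau hvb
      have hxab : x ∈ Set.Ioo a b := hx' hx
      have : DifferentiableAt ℝ F x :=
        ((hF.differentiableOn (by norm_num)) x (Set.Ioo_subset_Icc_self hxab)).differentiableAt
          (Icc_mem_nhds hxab.1 hxab.2)
      exact this.hasDerivAt
    obtain ⟨ξ, hξ, hslope⟩ := exists_hasDerivAt_eq_slope F (deriv F) huv hcont hdiff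
    have hξab : ξ ∈ Set.Ioo a b := Set.Ioo_subset_Ioo hau hvb hξ
    refine ⟨ξ, hξ, ?_⟩
    rw [hgeq ξ hξab, hslope, div_mul_cancel₀ _ (sub_ne_zero.2 huv.ne')]
  refine ⟨2 * M * K / c ^ 2 + 1, by positivity, ?_⟩
  intro z1 z2 z3 z4 haz1 h12 h23 h34 hz4b
  have h14 : z1 < z4 := h12.trans (h23.trans h34)
  have h13 : z1 < z3 := h12.trans h23
  have h24 : z2 < z4 := h23.trans h34
  have haz2 : a ≤ z2 := haz1.trans h12.le
  have haz3 : a ≤ z3 := haz2.trans h23.le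
  have hz3b : z3 ≤ b := h34.le.trans hz4b
  have hz2b : z2 ≤ b := h23.le.trans hz3b
  obtain ⟨p, hp, hpe⟩ := slope z1 z2 haz1 h12 hz2b
  obtain ⟨q, hq, hqe⟩ := slope z3 z4 haz3 h34 hz4b
  obtain ⟨r, hr, hre⟩ := slope z1 z3 haz1 h13 hz3b
  obtain ⟨s, hs, hse⟩ := slope z2 z4 haz2 h24 hz4b
  -- all mean value points lie in (z1, z4) ⊆ [a,b]
  have hsub14 : Set.Ioo z1 z4 ⊆ Set.Icc a b :=
    (Set.Ioo_subset_Icc_self).trans (Set.Icc_subset_Icc haz1 hz4b)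
  have hp14 : p ∈ Set.Ioo z1 z4 := Set.Ioo_subset_Ioo le_rfl h24.le hp
  have hq14 : q ∈ Set.Ioo z1 z4 := Set.Ioo_subset_Ioo h13.le le_rfl hq
  have hr14 : r ∈ Set.Ioo z1 z4 := Set.Ioo_subset_Ioo le_rfl h34.le hr
  have hs14 : s ∈ Set.Ioo z1 z4 := Set.Ioo_subset_Ioo h12.le le_rfl hs
  have hpab := hsub14 hp14
  have hqab := hsub14 hq14
  have hrab := hsub14 hr14
  have hsab := hsub14 hs14
  have hIoo : Set.Ioo z1 z4 ⊆ Set.Ioo a b := Set.Ioo_subset_Ioo haz1 hz4b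
  have hgp : c ≤ g p := hglb p (hIoo hp14)
  have hgq : c ≤ g q := hglb q (hIoo hq14)
  have hgr : c ≤ g r := hglb r (hIoo hr14)
  have hgs : c ≤ g s := hglb s (hIoo hs14)
  have hgpM : g p ≤ M := hgub p hpab
  have hgsM : g s ≤ M := hgub s hsab
  -- distortion equals the ratio of products of slopes
  have hd21 : (0:ℝ) < z2 - z1 := sub_pos.2 h12
  have hd43 : (0:ℝ) < z4 - z3 := sub_pos.2 h34
  have hd31 : (0:ℝ) < z3 - z1 := sub_pos.2 h13
  have hd42 : (0:ℝ) < z4 - z2 := sub_pos.2 h24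
  have hgrpos : (0:ℝ) < g r := lt_of_lt_of_le hc hgr
  have hgspos : (0:ℝ) < g s := lt_of_lt_of_le hc hgs
  have hDeq : Distortion z1 z2 z3 z4 F = (g p * g q) / (g r * g s) := by
    unfold Distortion Cr
    rw [show F z2 - F z1 = g p * (z2 - z1) from hpe,
        show F z4 - F z3 = g q * (z4 - z3) from hqe,
        show F z3 - F z1 = g r * (z3 - z1) from hre,
        show F z4 - F z2 = g s * (z4 - z2) from hse]
    field_simp
  -- numerator bound
  have hdist : ∀ x ∈ Set.Icc a b, ∀ y ∈ Set.Icc a b,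
      x ∈ Set.Ioo z1 z4 → y ∈ Set.Ioo z1 z4 → |g y - g x| ≤ K * (z4 - z1) := by
    intro x hx y hy hx14 hy14
    refine le_trans (hlip x hx y hy) (mul_le_mul_of_nonneg_left ?_ hK0)
    rw [abs_le]
    constructor <;> nlinarith [hx14.1, hx14.2, hy14.1, hy14.2]
  have hqs : |g q - g s| ≤ K * (z4 - z1) := hdist s hsab q hqab hs14 hq14
  have hpr : |g p - g r| ≤ K * (z4 - z1) := hdist r hrab p hpab hr14 hp14
  have hnum : |g p * g q - g r * g s| ≤ 2 * M * K * (z4 - z1) := by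
    have key : g p * g q - g r * g s = g p * (g q - g s) + g s * (g p - g r) := by ring
    rw [key]
    calc |g p * (g q - g s) + g s * (g p - g r)|
        ≤ |g p * (g q - g s)| + |g s * (g p - g r)| := abs_add_le _ _
      _ = |g p| * |g q - g s| + |g s| * |g p - g r| := by rw [abs_mul, abs_mul]
      _ ≤ M * (K * (z4 - z1)) + M * (K * (z4 - z1)) := by
          have h1 : |g p| ≤ M := hM p hpab
          have h2 : |g s| ≤ M := hM s hsab
          gcongr
      _ = 2 * M * K * (z4 - z1) := by ring
  -- final estimate
  have hden : c ^ 2 ≤ g r * g s := by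
    calc c ^ 2 = c * c := sq c
      _ ≤ g r * g s := mul_le_mul hgr hgs hc.le (hc.le.trans hgr)
  have hc2 : (0:ℝ) < c ^ 2 := by positivity
  have hdiff : Distortion z1 z2 z3 z4 F - 1 = (g p * g q - g r * g s) / (g r * g s) := by
    rw [hDeq, div_sub_one (by positivity : g r * g s ≠ 0)]
  rw [hdiff, abs_div, abs_of_pos (by positivity : (0:ℝ) < g r * g s)]
  calc |g p * g q - g r * g s| / (g r * g s)
      ≤ (2 * M * K * (z4 - z1)) / c ^ 2 :=
        div_le_div₀ (mul_nonneg (by positivity) (by linarith)) hnum hc2 hden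
    _ = (2 * M * K / c ^ 2) * (z4 - z1) := by ring
    _ ≤ (2 * M * K / c ^ 2 + 1) * (z4 - z1) :=
        mul_le_mul_of_nonneg_right (le_add_of_nonneg_right zero_le_one) (by linarith)
end

section
/- Let f be a strictly increasing continuous bijection of [z1,z4] onto its image, differentiable except at one interior point b ∈ (z1, z2) of [z1,z4], with one-sided derivatives Df₋(b), Df₊(b) > 0, f ∈ C² on [z1,b] and on [b,z4], and Df ≥ c > 0. Set σ = Df₋(b)/Df₊(b), α = z2 − z1, β = z3 − z2, τ = z2 − b, ξ = β/α, z = τ/α. Then |Dist(z1,z2,z3,z4;f) − (σ + (1−σ)z)(1+ξ)/(σ + (1−σ)z + ξ)| ≤ C2·(z4 − z1), where C2 depends only on bounds for f on [z1,z4]. -/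
open Set

/-- Algebraic stability of `r1*r2/(r3*r4)` under perturbations. -/
lemma quad_ratio_diff {c0 M0 ε r1 r2 r3 r4 s1 s2 s3 s4 : ℝ}
    (hc : 0 < c0)
    (hr1 : c0 ≤ r1) (hr1' : r1 ≤ M0) (hr2 : c0 ≤ r2) (hr2' : r2 ≤ M0)
    (hr3 : c0 ≤ r3) (hr3' : r3 ≤ M0) (hr4 : c0 ≤ r4) (hr4' : r4 ≤ M0)
    (hs1 : c0 ≤ s1) (hs1' : s1 ≤ M0) (hs2 : c0 ≤ s2) (hs2' : s2 ≤ M0)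
    (hs3 : c0 ≤ s3) (hs3' : s3 ≤ M0) (hs4 : c0 ≤ s4) (hs4' : s4 ≤ M0)
    (h1 : |r1 - s1| ≤ ε) (h2 : |r2 - s2| ≤ ε)
    (h3 : |r3 - s3| ≤ ε) (h4 : |r4 - s4| ≤ ε) :
    |r1 * r2 / (r3 * r4) - s1 * s2 / (s3 * s4)| ≤ 4 * M0 ^ 3 / c0 ^ 4 * ε := by
  have hM : 0 < M0 := lt_of_lt_of_le hc (hr1.trans hr1')
  have hε : 0 ≤ ε := le_trans (abs_nonneg _) h1
  have hD : (0:ℝ) < r3 * r4 := mul_pos (lt_of_lt_of_le hc hr3) (lt_of_lt_of_le hc hr4)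
  have hE : (0:ℝ) < s3 * s4 := mul_pos (lt_of_lt_of_le hc hs3) (lt_of_lt_of_le hc hs4)
  have hE2 : s3 * s4 ≤ M0 ^ 2 := by
    have := mul_le_mul hs3' hs4' (hc.trans_le hs4).le hM.le
    nlinarith
  have key : r1 * r2 / (r3 * r4) - s1 * s2 / (s3 * s4)
      = (r1 * r2 * (s3 * s4) - s1 * s2 * (r3 * r4)) / ((r3 * r4) * (s3 * s4)) := by
    rw [div_sub_div _ _ hD.ne' hE.ne']
    ring
  rw [key, abs_div, abs_of_pos (mul_pos hD hE)]
  have hs12 : |s1 * s2| ≤ M0 ^ 2 := by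
    rw [abs_of_pos (mul_pos (lt_of_lt_of_le hc hs1) (lt_of_lt_of_le hc hs2))]
    have := mul_le_mul hs1' hs2' (hc.trans_le hs2).le hM.le
    nlinarith
  have hnum : |r1 * r2 * (s3 * s4) - s1 * s2 * (r3 * r4)| ≤ 4 * M0 ^ 3 * ε := by
    have hexp : r1 * r2 * (s3 * s4) - s1 * s2 * (r3 * r4)
        = (r1 - s1) * (r2 * (s3 * s4)) + s1 * ((r2 - s2) * (s3 * s4))
          + (s1 * s2) * ((s3 - r3) * s4) + (s1 * s2) * (r3 * (s4 - r4)) := by ring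
    rw [hexp]
    have b1 : |(r1 - s1) * (r2 * (s3 * s4))| ≤ ε * M0 ^ 3 := by
      rw [abs_mul]
      have h0 : |r2 * (s3 * s4)| ≤ M0 ^ 3 := by
        rw [abs_of_pos (mul_pos (lt_of_lt_of_le hc hr2) hE)]
        have := mul_le_mul hr2' hE2 hE.le hM.le
        nlinarith
      exact mul_le_mul h1 h0 (abs_nonneg _) hε
    have b2 : |s1 * ((r2 - s2) * (s3 * s4))| ≤ M0 ^ 3 * ε := by
      rw [abs_mul, abs_mul]
      have hs1a : |s1| ≤ M0 := by rw [abs_of_pos (lt_of_lt_of_le hc hs1)]; exact hs1'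
      have hEa : |s3 * s4| ≤ M0 ^ 2 := by rw [abs_of_pos hE]; exact hE2
      calc |s1| * (|r2 - s2| * |s3 * s4|) ≤ M0 * (ε * M0 ^ 2) := by
            apply mul_le_mul hs1a _ (by positivity) (le_of_lt hM)
            exact mul_le_mul h2 hEa (abs_nonneg _) hε
        _ = M0 ^ 3 * ε := by ring
    have b3 : |(s1 * s2) * ((s3 - r3) * s4)| ≤ M0 ^ 2 * (ε * M0) := by
      rw [abs_mul]
      apply mul_le_mul hs12 _ (abs_nonneg _) (by positivity)
      rw [abs_mul]
      have hs4a : |s4| ≤ M0 := by rw [abs_of_pos (lt_of_lt_of_le hc hs4)]; exact hs4'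
      have h3' : |s3 - r3| ≤ ε := by rw [abs_sub_comm]; exact h3
      exact mul_le_mul h3' hs4a (abs_nonneg _) hε
    have b4 : |(s1 * s2) * (r3 * (s4 - r4))| ≤ M0 ^ 2 * (M0 * ε) := by
      rw [abs_mul]
      apply mul_le_mul hs12 _ (abs_nonneg _) (by positivity)
      rw [abs_mul]
      have hr3a : |r3| ≤ M0 := by rw [abs_of_pos (lt_of_lt_of_le hc hr3)]; exact hr3'
      have h4' : |s4 - r4| ≤ ε := by rw [abs_sub_comm]; exact h4
      exact mul_le_mul hr3a h4' (abs_nonneg _) (le_of_lt hM)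
    calc |(r1 - s1) * (r2 * (s3 * s4)) + s1 * ((r2 - s2) * (s3 * s4))
          + (s1 * s2) * ((s3 - r3) * s4) + (s1 * s2) * (r3 * (s4 - r4))|
        ≤ |(r1 - s1) * (r2 * (s3 * s4)) + s1 * ((r2 - s2) * (s3 * s4))
          + (s1 * s2) * ((s3 - r3) * s4)| + |(s1 * s2) * (r3 * (s4 - r4))| := abs_add_le _ _
      _ ≤ (|(r1 - s1) * (r2 * (s3 * s4)) + s1 * ((r2 - s2) * (s3 * s4))|
          + |(s1 * s2) * ((s3 - r3) * s4)|) + |(s1 * s2) * (r3 * (s4 - r4))| := by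
            gcongr; exact abs_add_le _ _
      _ ≤ ((|(r1 - s1) * (r2 * (s3 * s4))| + |s1 * ((r2 - s2) * (s3 * s4))|)
          + |(s1 * s2) * ((s3 - r3) * s4)|) + |(s1 * s2) * (r3 * (s4 - r4))| := by
            gcongr; exact abs_add_le _ _
      _ ≤ ((ε * M0 ^ 3 + M0 ^ 3 * ε) + M0 ^ 2 * (ε * M0)) + M0 ^ 2 * (M0 * ε) := by
            gcongr
      _ = 4 * M0 ^ 3 * ε := by ring
  have hden : c0 ^ 4 ≤ (r3 * r4) * (s3 * s4) := by
    have hc2 : c0 * c0 ≤ r3 * r4 := mul_le_mul hr3 hr4 hc.le (hc.trans_le hr3).le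
    have hc3 : c0 * c0 ≤ s3 * s4 := mul_le_mul hs3 hs4 hc.le (hc.trans_le hs3).le
    have := mul_le_mul hc2 hc3 (by positivity) hD.le
    nlinarith
  calc |r1 * r2 * (s3 * s4) - s1 * s2 * (r3 * r4)| / ((r3 * r4) * (s3 * s4))
      ≤ (4 * M0 ^ 3 * ε) / c0 ^ 4 := by
        apply div_le_div₀ (by positivity) hnum (by positivity) hden
    _ = 4 * M0 ^ 3 / c0 ^ 4 * ε := by ring

/-- Second-order Taylor-type bound for a C² function on a closed interval. -/
lemma taylor_slope_bound {f : ℝ → ℝ} {a b : ℝ} (hab : a < b)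
    (hf : ContDiffOn ℝ 2 f (Set.Icc a b)) :
    ∃ L ≥ (0:ℝ), ∀ p ∈ Set.Icc a b, ∀ x ∈ Set.Icc a b, ∀ y ∈ Set.Icc a b, x ≤ y →
      |f y - f x - derivWithin f (Set.Icc a b) p * (y - x)|
        ≤ L * ((|x - p| + |y - p|) * (y - x)) := by
  have hu : UniqueDiffOn ℝ (Icc a b) := uniqueDiffOn_Icc hab
  set g := derivWithin f (Icc a b) with hg
  have hgC1 : ContDiffOn ℝ 1 g (Icc a b) := hf.derivWithin hu (by norm_num)
  have hfg : DifferentiableOn ℝ f (Icc a b) := hf.differentiableOn (by norm_num)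
  have hgdiff : DifferentiableOn ℝ g (Icc a b) := hgC1.differentiableOn (by norm_num)
  have hg'cont : ContinuousOn (derivWithin g (Icc a b)) (Icc a b) :=
    hgC1.continuousOn_derivWithin hu le_rfl
  obtain ⟨L0, hL0⟩ := (isCompact_Icc).exists_bound_of_continuousOn hg'cont
  set L := max L0 0 with hL
  have hLnn : (0:ℝ) ≤ L := le_max_right _ _
  have hlip : ∀ s ∈ Icc a b, ∀ t ∈ Icc a b, |g t - g s| ≤ L * |t - s| := by
    intro s hs t ht
    have := Convex.norm_image_sub_le_of_norm_hasDerivWithin_le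
      (f := g) (f' := derivWithin g (Icc a b)) (s := Icc a b) (C := L)
      (fun u hu' => (hgdiff u hu').hasDerivWithinAt)
      (fun u hu' => le_trans (hL0 u hu') (le_max_left _ _))
      (convex_Icc a b) hs ht
    simpa [Real.norm_eq_abs] using this
  refine ⟨L, hLnn, ?_⟩
  intro p hp x hx y hy hxy
  rcases eq_or_lt_of_le hxy with rfl | hxy'
  · simp
  have hsub : Icc x y ⊆ Icc a b := Icc_subset_Icc hx.1 hy.2
  have key := Convex.norm_image_sub_le_of_norm_hasDerivWithin_le
    (f := fun t => f t - g p * t) (f' := fun t => g t - g p) (s := Icc x y)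
    (C := L * (|x - p| + |y - p|))
    (fun u hu' => by
      have h1 : HasDerivWithinAt f (g u) (Icc x y) u :=
        ((hfg u (hsub hu')).hasDerivWithinAt).mono hsub
      simpa using h1.fun_sub ((hasDerivWithinAt_id u _).const_mul (g p)))
    (fun u hu' => by
      have h1 : |g u - g p| ≤ L * |u - p| := hlip p hp u (hsub hu')
      have h2 : |u - p| ≤ |x - p| + |y - p| := by
        rw [abs_le]
        constructor
        · have := neg_abs_le (x - p)
          have := abs_nonneg (y - p)
          have := hu'.1
          linarith
        · have := le_abs_self (y - p)
          have := abs_nonneg (x - p)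
          have := hu'.2
          linarith
      calc ‖g u - g p‖ = |g u - g p| := rfl
        _ ≤ L * |u - p| := h1
        _ ≤ L * (|x - p| + |y - p|) := by
            apply mul_le_mul_of_nonneg_left h2 hLnn)
    (convex_Icc x y) (left_mem_Icc.2 hxy) (right_mem_Icc.2 hxy)
  have hkey : |(f y - g p * y) - (f x - g p * x)| ≤ L * (|x - p| + |y - p|) * |y - x| := key
  rw [abs_of_nonneg (by linarith : (0:ℝ) ≤ y - x)] at hkey
  calc |f y - f x - g p * (y - x)| = |(f y - g p * y) - (f x - g p * x)| := by ring_nf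
    _ ≤ L * (|x - p| + |y - p|) * (y - x) := hkey
    _ = L * ((|x - p| + |y - p|) * (y - x)) := by ring

set_option maxHeartbeats 1000000 in
/-- Lemma 2.9 (Dzhalilov–Khanin): cross-ratio distortion at a break point `b`
with jump ratio `σ = Df₋(b)/Df₊(b)`. -/
theorem distortion_at_break_point (A B : ℝ) (hAB : A < B)
    (f : ℝ → ℝ) (bp : ℝ) (hbp : bp ∈ Set.Ioo A B) (c : ℝ) (hc : 0 < c)
    (hmono : StrictMonoOn f (Set.Icc A B))
    (hcont : ContinuousOn f (Set.Icc A B))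
    (hC2l : ContDiffOn ℝ 2 f (Set.Icc A bp))
    (hC2r : ContDiffOn ℝ 2 f (Set.Icc bp B))
    (Dm Dp : ℝ) (hDm : HasDerivWithinAt f Dm (Set.Iic bp) bp)
    (hDp : HasDerivWithinAt f Dp (Set.Ici bp) bp)
    (hDmpos : 0 < Dm) (hDppos : 0 < Dp)
    (hderiv : ∀ x ∈ Set.Icc A B, x ≠ bp → c ≤ deriv f x) :
    ∃ C2 > 0, ∀ z1 z2 z3 z4 : ℝ,
      A ≤ z1 → z1 < bp → bp < z2 → z2 < z3 → z3 < z4 → z4 ≤ B →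
      |Distortion z1 z2 z3 z4 f -
        ((Dm / Dp + (1 - Dm / Dp) * ((z2 - bp) / (z2 - z1))) *
            (1 + (z3 - z2) / (z2 - z1))) /
          (Dm / Dp + (1 - Dm / Dp) * ((z2 - bp) / (z2 - z1)) +
            (z3 - z2) / (z2 - z1))| ≤ C2 * (z4 - z1) := by
  obtain ⟨hA, hB⟩ := hbp
  obtain ⟨L1, hL1n, hT1⟩ := taylor_slope_bound hA hC2l
  obtain ⟨L2, hL2n, hT2⟩ := taylor_slope_bound hB hC2r
  -- identify the one-sided derivatives
  have hgl : derivWithin f (Icc A bp) bp = Dm :=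
    (hDm.mono Icc_subset_Iic_self).derivWithin
      ((uniqueDiffOn_Icc hA) bp ⟨hA.le, le_rfl⟩)
  have hgr : derivWithin f (Icc bp B) bp = Dp :=
    (hDp.mono Icc_subset_Ici_self).derivWithin
      ((uniqueDiffOn_Icc hB) bp ⟨le_rfl, hB.le⟩)
  have hbpl : bp ∈ Icc A bp := ⟨hA.le, le_rfl⟩
  have hbpr : bp ∈ Icc bp B := ⟨le_rfl, hB.le⟩
  -- Taylor bounds with explicit one-sided derivatives
  have hTl : ∀ x ∈ Icc A bp, ∀ y ∈ Icc A bp, x ≤ y →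
      |f y - f x - Dm * (y - x)| ≤ L1 * ((|x - bp| + |y - bp|) * (y - x)) := by
    intro x hx y hy hxy
    have := hT1 bp hbpl x hx y hy hxy
    rwa [hgl] at this
  have hTr : ∀ x ∈ Icc bp B, ∀ y ∈ Icc bp B, x ≤ y →
      |f y - f x - Dp * (y - x)| ≤ L2 * ((|x - bp| + |y - bp|) * (y - x)) := by
    intro x hx y hy hxy
    have := hT2 bp hbpr x hx y hy hxy
    rwa [hgr] at this
  -- lower slope bound
  have hlowside : ∀ (a b : ℝ), a < b → ContDiffOn ℝ 2 f (Icc a b) → A ≤ a → b ≤ B →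
      (∀ t ∈ Ioo a b, t ≠ bp) →
      ∀ x y, a ≤ x → x ≤ y → y ≤ b → c * (y - x) ≤ f y - f x := by
    intro a b hab hf ha hb hne
    have hφ : MonotoneOn (fun t => f t - c * t) (Icc a b) := by
      apply monotoneOn_of_deriv_nonneg (convex_Icc a b)
      · exact (hf.continuousOn).sub (Continuous.continuousOn (by continuity))
      · rw [interior_Icc]
        intro t ht
        have hft : DifferentiableAt ℝ f t :=
          ((hf.differentiableOn (by norm_num)) t (Ioo_subset_Icc_self ht)).differentiableAt
            (Icc_mem_nhds ht.1 ht.2)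
        exact (hft.sub (by fun_prop)).differentiableWithinAt
      · rw [interior_Icc]
        intro t ht
        have hft : DifferentiableAt ℝ f t :=
          ((hf.differentiableOn (by norm_num)) t (Ioo_subset_Icc_self ht)).differentiableAt
            (Icc_mem_nhds ht.1 ht.2)
        have hd : deriv (fun t => f t - c * t) t = deriv f t - c := by
          rw [deriv_fun_sub hft (g := fun t => c * t) (by fun_prop)]
          congr 1
          rw [deriv_const_mul _ differentiableAt_id]; simp
        rw [hd]
        have := hderiv t ⟨ha.trans ht.1.le, ht.2.le.trans hb⟩ (hne t ht)
        linarith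
    intro x y hx hxy hy
    have := hφ (Set.mem_Icc.2 ⟨hx, hxy.trans hy⟩) (Set.mem_Icc.2 ⟨hx.trans hxy, hy⟩) hxy
    simp only at this
    linarith
  have hlowL : ∀ x y, A ≤ x → x ≤ y → y ≤ bp → c * (y - x) ≤ f y - f x :=
    hlowside A bp hA hC2l le_rfl hB.le (fun t ht => ne_of_lt ht.2)
  have hlowR : ∀ x y, bp ≤ x → x ≤ y → y ≤ B → c * (y - x) ≤ f y - f x :=
    hlowside bp B hB hC2r hA.le le_rfl (fun t ht => ne_of_gt ht.1)
  -- constants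
  set L : ℝ := max (max L1 L2) 1 with hLdef
  have hL1le : L1 ≤ L := le_trans (le_max_left _ _) (le_max_left _ _)
  have hL2le : L2 ≤ L := le_trans (le_max_right _ _) (le_max_left _ _)
  have hL1' : (1:ℝ) ≤ L := le_max_right _ _
  have hLpos : (0:ℝ) < L := lt_of_lt_of_le one_pos hL1'
  set M0 : ℝ := max Dm Dp + 2 * L * (B - A) with hM0def
  have hM0pos : 0 < M0 := by
    have : (0:ℝ) < max Dm Dp := lt_of_lt_of_le hDmpos (le_max_left _ _)
    have h2 : (0:ℝ) ≤ 2 * L * (B - A) := mul_nonneg (by linarith) (by linarith)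
    linarith
  set c0 : ℝ := min c (min Dm Dp) with hc0def
  have hc0pos : 0 < c0 := lt_min hc (lt_min hDmpos hDppos)
  have hc0c : c0 ≤ c := min_le_left _ _
  have hc0Dm : c0 ≤ Dm := le_trans (min_le_right _ _) (min_le_left _ _)
  have hc0Dp : c0 ≤ Dp := le_trans (min_le_right _ _) (min_le_right _ _)
  have hDmM0 : Dm ≤ M0 := by
    have : Dm ≤ max Dm Dp := le_max_left _ _
    have h2 : (0:ℝ) ≤ 2 * L * (B - A) := mul_nonneg (by linarith) (by linarith)
    linarith
  have hDpM0 : Dp ≤ M0 := by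
    have : Dp ≤ max Dm Dp := le_max_right _ _
    have h2 : (0:ℝ) ≤ 2 * L * (B - A) := mul_nonneg (by linarith) (by linarith)
    linarith
  have hmaxM0 : max Dm Dp ≤ M0 := by
    have h2 : (0:ℝ) ≤ 2 * L * (B - A) := mul_nonneg (by linarith) (by linarith)
    rw [hM0def]; linarith
  have hC2pos : 0 < 4 * M0 ^ 3 / c0 ^ 4 * (2 * L) := by
    have h1 : 0 < M0 ^ 3 := pow_pos hM0pos 3
    have h2 : 0 < c0 ^ 4 := pow_pos hc0pos 4
    have h3 : 0 < 4 * M0 ^ 3 / c0 ^ 4 := div_pos (by linarith) h2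
    exact mul_pos h3 (by linarith)
  refine ⟨4 * M0 ^ 3 / c0 ^ 4 * (2 * L), hC2pos, ?_⟩
  intro z1 z2 z3 z4 hz1 hz1b hbz2 hz23 hz34 hz4
  -- basic order facts
  have hz12 : z1 < z2 := lt_trans hz1b hbz2
  have hz13 : z1 < z3 := lt_trans hz12 hz23
  have hz14 : z1 < z4 := lt_trans hz13 hz34
  have hz24 : z2 < z4 := lt_trans hz23 hz34
  set Δ : ℝ := z4 - z1 with hΔdef
  have hΔpos : 0 < Δ := by simp [hΔdef]; linarith
  have hΔle : Δ ≤ B - A := by simp [hΔdef]; linarith [hz1, hz4]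
  -- memberships
  have hm1 : z1 ∈ Icc A bp := ⟨hz1, hz1b.le⟩
  have hm2 : z2 ∈ Icc bp B := ⟨hbz2.le, by linarith⟩
  have hm3 : z3 ∈ Icc bp B := ⟨by linarith, by linarith⟩
  have hm4 : z4 ∈ Icc bp B := ⟨by linarith, hz4⟩
  -- lengths
  have hl1 : (0:ℝ) < z2 - z1 := by linarith
  have hl2 : (0:ℝ) < z4 - z3 := by linarith
  have hl3 : (0:ℝ) < z3 - z1 := by linarith
  have hl4 : (0:ℝ) < z4 - z2 := by linarith
  -- slope error bounds (the five elementary estimates)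
  have e1 : |f bp - f z1 - Dm * (bp - z1)| ≤ 2 * L * Δ * (bp - z1) := by
    have := hTl z1 hm1 bp hbpl hz1b.le
    have habs : |z1 - bp| = bp - z1 := by rw [abs_sub_comm, abs_of_pos (by linarith)]
    have habs2 : |bp - bp| = (0:ℝ) := by simp
    rw [habs, habs2, add_zero] at this
    have h1 : bp - z1 ≤ Δ := by simp [hΔdef]; linarith
    have hpos : (0:ℝ) ≤ bp - z1 := by linarith
    have k1 : L1 * (bp - z1) ≤ L * Δ :=
      mul_le_mul hL1le h1 hpos hLpos.le
    have k2 := mul_le_mul_of_nonneg_right k1 hpos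
    have k3 : (0:ℝ) ≤ L * Δ * (bp - z1) :=
      mul_nonneg (mul_nonneg hLpos.le hΔpos.le) hpos
    calc |f bp - f z1 - Dm * (bp - z1)| ≤ L1 * ((bp - z1) * (bp - z1)) := this
      _ = L1 * (bp - z1) * (bp - z1) := by ring
      _ ≤ L * Δ * (bp - z1) := k2
      _ ≤ 2 * L * Δ * (bp - z1) := by linarith
  have eR : ∀ x y, bp ≤ x → x ≤ y → y ≤ z4 →
      |f y - f x - Dp * (y - x)| ≤ 2 * L * Δ * (y - x) := by
    intro x y hx hxy hy
    have hyB : y ≤ B := le_trans hy hz4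
    have := hTr x ⟨hx, le_trans hxy hyB⟩ y ⟨le_trans hx hxy, hyB⟩ hxy
    have habs1 : |x - bp| = x - bp := abs_of_nonneg (by linarith)
    have habs2 : |y - bp| = y - bp := abs_of_nonneg (by linarith)
    rw [habs1, habs2] at this
    have h1 : x - bp ≤ Δ := by simp [hΔdef]; linarith
    have h2 : y - bp ≤ Δ := by simp [hΔdef]; linarith
    have hsum : x - bp + (y - bp) ≤ 2 * Δ := by linarith
    have hsumnn : (0:ℝ) ≤ x - bp + (y - bp) := by linarith
    have k1 : L2 * (x - bp + (y - bp)) ≤ L * (2 * Δ) :=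
      mul_le_mul hL2le hsum hsumnn hLpos.le
    have k2 := mul_le_mul_of_nonneg_right k1 (by linarith : (0:ℝ) ≤ y - x)
    calc |f y - f x - Dp * (y - x)| ≤ L2 * ((x - bp + (y - bp)) * (y - x)) := this
      _ = L2 * (x - bp + (y - bp)) * (y - x) := by ring
      _ ≤ L * (2 * Δ) * (y - x) := k2
      _ = 2 * L * Δ * (y - x) := by ring
  have e2 := eR bp z2 le_rfl hbz2.le (by linarith)
  have e3 := eR bp z3 le_rfl (by linarith) (by linarith)
  have e4 := eR z3 z4 (by linarith) hz34.le le_rfl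
  have e5 := eR z2 z4 hbz2.le hz24.le le_rfl
  -- actual and idealized increments
  set a1 : ℝ := f z2 - f z1 with ha1
  set a2 : ℝ := f z4 - f z3 with ha2
  set a3 : ℝ := f z3 - f z1 with ha3
  set a4 : ℝ := f z4 - f z2 with ha4
  set b1 : ℝ := Dm * (bp - z1) + Dp * (z2 - bp) with hb1
  set b2 : ℝ := Dp * (z4 - z3) with hb2
  set b3 : ℝ := Dm * (bp - z1) + Dp * (z3 - bp) with hb3
  set b4 : ℝ := Dp * (z4 - z2) with hb4
  have ea1 : |a1 - b1| ≤ 2 * L * Δ * (z2 - z1) := by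
    have h12 : a1 - b1 = (f z2 - f bp - Dp * (z2 - bp)) + (f bp - f z1 - Dm * (bp - z1)) := by
      rw [ha1, hb1]; ring
    rw [h12]
    calc |(f z2 - f bp - Dp * (z2 - bp)) + (f bp - f z1 - Dm * (bp - z1))|
        ≤ |f z2 - f bp - Dp * (z2 - bp)| + |f bp - f z1 - Dm * (bp - z1)| := abs_add_le _ _
      _ ≤ 2 * L * Δ * (z2 - bp) + 2 * L * Δ * (bp - z1) := add_le_add e2 e1
      _ = 2 * L * Δ * (z2 - z1) := by ring
  have ea3 : |a3 - b3| ≤ 2 * L * Δ * (z3 - z1) := by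
    have h13 : a3 - b3 = (f z3 - f bp - Dp * (z3 - bp)) + (f bp - f z1 - Dm * (bp - z1)) := by
      rw [ha3, hb3]; ring
    rw [h13]
    calc |(f z3 - f bp - Dp * (z3 - bp)) + (f bp - f z1 - Dm * (bp - z1))|
        ≤ |f z3 - f bp - Dp * (z3 - bp)| + |f bp - f z1 - Dm * (bp - z1)| := abs_add_le _ _
      _ ≤ 2 * L * Δ * (z3 - bp) + 2 * L * Δ * (bp - z1) := add_le_add e3 e1
      _ = 2 * L * Δ * (z3 - z1) := by ring
  have ea2 : |a2 - b2| ≤ 2 * L * Δ * (z4 - z3) := e4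
  have ea4 : |a4 - b4| ≤ 2 * L * Δ * (z4 - z2) := e5
  -- lower bounds on actual increments
  have hla1 : c * (z2 - z1) ≤ a1 := by
    have h1 := hlowL z1 bp hz1 hz1b.le le_rfl
    have h2 := hlowR bp z2 le_rfl hbz2.le (by linarith)
    rw [ha1]; linarith
  have hla3 : c * (z3 - z1) ≤ a3 := by
    have h1 := hlowL z1 bp hz1 hz1b.le le_rfl
    have h2 := hlowR bp z3 le_rfl (by linarith) (by linarith)
    rw [ha3]; linarith
  have hla2 : c * (z4 - z3) ≤ a2 := hlowR z3 z4 (by linarith) hz34.le hz4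
  have hla4 : c * (z4 - z2) ≤ a4 := hlowR z2 z4 hbz2.le hz24.le hz4
  -- upper bounds on actual increments: a_i ≤ M0 * ℓ_i
  have hΔL : 2 * L * Δ ≤ 2 * L * (B - A) :=
    mul_le_mul_of_nonneg_left hΔle (by linarith : (0:ℝ) ≤ 2 * L)
  have hub : ∀ (a b ℓ D : ℝ), |a - b| ≤ 2 * L * Δ * ℓ → b ≤ (max Dm Dp) * ℓ → 0 < ℓ →
      a ≤ M0 * ℓ := by
    intro a b ℓ D h1 h2 hℓ
    have h0 := (abs_le.1 h1).2
    have h3 : 2 * L * Δ * ℓ ≤ 2 * L * (B - A) * ℓ :=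
      mul_le_mul_of_nonneg_right hΔL hℓ.le
    rw [hM0def]
    linarith [h0, h2, h3]
  have hbl1 : b1 ≤ (max Dm Dp) * (z2 - z1) := by
    rw [hb1]
    have h1 : Dm ≤ max Dm Dp := le_max_left _ _
    have h2 : Dp ≤ max Dm Dp := le_max_right _ _
    linarith [mul_le_mul_of_nonneg_right h1 (by linarith : (0:ℝ) ≤ bp - z1),
      mul_le_mul_of_nonneg_right h2 (by linarith : (0:ℝ) ≤ z2 - bp)]
  have hbl3 : b3 ≤ (max Dm Dp) * (z3 - z1) := by
    rw [hb3]
    have h1 : Dm ≤ max Dm Dp := le_max_left _ _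
    have h2 : Dp ≤ max Dm Dp := le_max_right _ _
    linarith [mul_le_mul_of_nonneg_right h1 (by linarith : (0:ℝ) ≤ bp - z1),
      mul_le_mul_of_nonneg_right h2 (by linarith : (0:ℝ) ≤ z3 - bp)]
  have hbl2 : b2 ≤ (max Dm Dp) * (z4 - z3) := by
    rw [hb2]
    exact mul_le_mul_of_nonneg_right (le_max_right _ _) (by linarith)
  have hbl4 : b4 ≤ (max Dm Dp) * (z4 - z2) := by
    rw [hb4]
    exact mul_le_mul_of_nonneg_right (le_max_right _ _) (by linarith)
  have hua1 : a1 ≤ M0 * (z2 - z1) := hub a1 b1 _ Dm ea1 hbl1 hl1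
  have hua2 : a2 ≤ M0 * (z4 - z3) := hub a2 b2 _ Dp ea2 hbl2 hl2
  have hua3 : a3 ≤ M0 * (z3 - z1) := hub a3 b3 _ Dm ea3 hbl3 hl3
  have hua4 : a4 ≤ M0 * (z4 - z2) := hub a4 b4 _ Dp ea4 hbl4 hl4
  -- lower bounds on idealized increments
  have hlb1 : c0 * (z2 - z1) ≤ b1 := by
    rw [hb1]
    linarith [mul_le_mul_of_nonneg_right hc0Dm (by linarith : (0:ℝ) ≤ bp - z1),
      mul_le_mul_of_nonneg_right hc0Dp (by linarith : (0:ℝ) ≤ z2 - bp)]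
  have hlb3 : c0 * (z3 - z1) ≤ b3 := by
    rw [hb3]
    linarith [mul_le_mul_of_nonneg_right hc0Dm (by linarith : (0:ℝ) ≤ bp - z1),
      mul_le_mul_of_nonneg_right hc0Dp (by linarith : (0:ℝ) ≤ z3 - bp)]
  have hlb2 : c0 * (z4 - z3) ≤ b2 := by
    rw [hb2]
    linarith [mul_le_mul_of_nonneg_right hc0Dp (by linarith : (0:ℝ) ≤ z4 - z3)]
  have hlb4 : c0 * (z4 - z2) ≤ b4 := by
    rw [hb4]
    linarith [mul_le_mul_of_nonneg_right hc0Dp (by linarith : (0:ℝ) ≤ z4 - z2)]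
  -- normalized slopes
  set r1 : ℝ := a1 / (z2 - z1) with hr1
  set r2 : ℝ := a2 / (z4 - z3) with hr2
  set r3 : ℝ := a3 / (z3 - z1) with hr3
  set r4 : ℝ := a4 / (z4 - z2) with hr4
  set s1 : ℝ := b1 / (z2 - z1) with hs1
  set s2 : ℝ := b2 / (z4 - z3) with hs2
  set s3 : ℝ := b3 / (z3 - z1) with hs3
  set s4 : ℝ := b4 / (z4 - z2) with hs4
  have hdivlb : ∀ (a ℓ : ℝ), 0 < ℓ → c0 * ℓ ≤ a → c0 ≤ a / ℓ := by
    intro a ℓ hℓ h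
    rw [le_div_iff₀ hℓ]; linarith
  have hdivub : ∀ (a ℓ : ℝ), 0 < ℓ → a ≤ M0 * ℓ → a / ℓ ≤ M0 := by
    intro a ℓ hℓ h
    rw [div_le_iff₀ hℓ]; linarith
  have hdiverr : ∀ (a b ℓ : ℝ), 0 < ℓ → |a - b| ≤ 2 * L * Δ * ℓ →
      |a / ℓ - b / ℓ| ≤ 2 * L * Δ := by
    intro a b ℓ hℓ h
    rw [div_sub_div_same, abs_div, abs_of_pos hℓ, div_le_iff₀ hℓ]
    linarith
  have hclow : ∀ (a ℓ : ℝ), 0 < ℓ → c * ℓ ≤ a → c0 * ℓ ≤ a := by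
    intro a ℓ hℓ h
    linarith [mul_le_mul_of_nonneg_right hc0c hℓ.le]
  -- the main quadruple estimate
  have hquad := quad_ratio_diff (c0 := c0) (M0 := M0) (ε := 2 * L * Δ)
    hc0pos
    (hdivlb a1 _ hl1 (hclow a1 _ hl1 hla1)) (hdivub a1 _ hl1 hua1)
    (hdivlb a2 _ hl2 (hclow a2 _ hl2 hla2)) (hdivub a2 _ hl2 hua2)
    (hdivlb a3 _ hl3 (hclow a3 _ hl3 hla3)) (hdivub a3 _ hl3 hua3)
    (hdivlb a4 _ hl4 (hclow a4 _ hl4 hla4)) (hdivub a4 _ hl4 hua4)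
    (hdivlb b1 _ hl1 hlb1)
    (hdivub b1 _ hl1 (le_trans hbl1 (mul_le_mul_of_nonneg_right hmaxM0 hl1.le)))
    (hdivlb b2 _ hl2 hlb2)
    (hdivub b2 _ hl2 (le_trans hbl2 (mul_le_mul_of_nonneg_right hmaxM0 hl2.le)))
    (hdivlb b3 _ hl3 hlb3)
    (hdivub b3 _ hl3 (le_trans hbl3 (mul_le_mul_of_nonneg_right hmaxM0 hl3.le)))
    (hdivlb b4 _ hl4 hlb4)
    (hdivub b4 _ hl4 (le_trans hbl4 (mul_le_mul_of_nonneg_right hmaxM0 hl4.le)))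
    (hdiverr a1 b1 _ hl1 ea1) (hdiverr a2 b2 _ hl2 ea2)
    (hdiverr a3 b3 _ hl3 ea3) (hdiverr a4 b4 _ hl4 ea4)
  -- identify Distortion with r1*r2/(r3*r4)
  have ha3pos : 0 < a3 := lt_of_lt_of_le (by positivity) hla3
  have ha4pos : 0 < a4 := lt_of_lt_of_le (by positivity) hla4
  have hI1 : Distortion z1 z2 z3 z4 f = r1 * r2 / (r3 * r4) := by
    have n1 : z2 - z1 ≠ 0 := ne_of_gt hl1
    have n2 : z4 - z3 ≠ 0 := ne_of_gt hl2
    have n3 : z3 - z1 ≠ 0 := ne_of_gt hl3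
    have n4 : z4 - z2 ≠ 0 := ne_of_gt hl4
    have na3 : f z3 - f z1 ≠ 0 := by rw [ha3] at ha3pos; exact ne_of_gt ha3pos
    have na4 : f z4 - f z2 ≠ 0 := by rw [ha4] at ha4pos; exact ne_of_gt ha4pos
    rw [Distortion, Cr, Cr, hr1, hr2, hr3, hr4, ha1, ha2, ha3, ha4]
    field_simp
  -- identify the target with s1*s2/(s3*s4)
  have hb3pos : 0 < b3 := lt_of_lt_of_le (by positivity) hlb3
  have hI2 : ((Dm / Dp + (1 - Dm / Dp) * ((z2 - bp) / (z2 - z1))) *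
            (1 + (z3 - z2) / (z2 - z1))) /
          (Dm / Dp + (1 - Dm / Dp) * ((z2 - bp) / (z2 - z1)) +
            (z3 - z2) / (z2 - z1)) = s1 * s2 / (s3 * s4) := by
    have hha : Dm/Dp + (1-Dm/Dp)*((z2-bp)/(z2-z1))
        = (Dm*(bp-z1)+Dp*(z2-bp))/(Dp*(z2-z1)) := by field_simp; ring
    have hhb : (1 + (z3-z2)/(z2-z1)) = (z3-z1)/(z2-z1) := by field_simp; ring
    have hhc : Dm/Dp + (1-Dm/Dp)*((z2-bp)/(z2-z1)) + (z3-z2)/(z2-z1)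
        = (Dm*(bp-z1)+Dp*(z3-bp))/(Dp*(z2-z1)) := by field_simp; ring
    rw [hhc, hha, hhb, hs1, hs2, hs3, hs4, hb1, hb2, hb3, hb4]
    have hh2 : Dp*(z4-z3)/(z4-z3) = Dp := by field_simp
    have hh4 : Dp*(z4-z2)/(z4-z2) = Dp := by field_simp
    rw [hh2, hh4]
    have hN : Dm*(bp-z1) + Dp*(z3-bp) ≠ 0 := by
      rw [hb3] at hb3pos; exact ne_of_gt hb3pos
    have hDp0 : Dp ≠ 0 := ne_of_gt hDppos
    have n1 : z2 - z1 ≠ 0 := ne_of_gt hl1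
    have n3 : z3 - z1 ≠ 0 := ne_of_gt hl3
    field_simp
  rw [hI1, hI2]
  calc |r1 * r2 / (r3 * r4) - s1 * s2 / (s3 * s4)|
      ≤ 4 * M0 ^ 3 / c0 ^ 4 * (2 * L * Δ) := hquad
    _ = 4 * M0 ^ 3 / c0 ^ 4 * (2 * L) * Δ := by ring
end
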